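/- Let 1 ≤ p < ∞, R > 0, N ≥ 1 an integer, let f : ℝ^N × ℝ^N → ℝ^N be locally Lipschitz continuous, let B ⊂ C([−R,0],ℝ^N) be a bounded set and δ > 0. Then for all sufficiently small T > 0 there exists c ∈ (0,1) such that for every (φ,r) ∈ B × [0,R] the operator 𝒯(·,φ,r) maps Γ̄(δ) into Γ_{1,p}(δ) and is a uniform contraction: for all y_1, y_2 ∈ Γ̄(δ), ‖𝒯(y_1,φ,r) − 𝒯(y_2,φ,r)‖_{W^{1,p}[−R,T]} ≤ c·‖y_1 − y_2‖_{C[−R,T]}. -/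

import Mathlib

open MeasureTheory Set ENNReal

noncomputable section

/-- `ℝ^N` with a fixed norm (the Euclidean one). -/
abbrev Vec (N : ℕ) : Type := EuclideanSpace ℝ (Fin N)

/-- `x ∈ W^{1,p}([a,b],ℝ^N)`: `x` is absolutely continuous on `[a,b]` (equivalently, it is the
integral of its almost-everywhere derivative `x'`), and `x' ∈ L^p([a,b],ℝ^N)`. -/
def HasW1pOn {N : ℕ} (x x' : ℝ → Vec N) (p a b : ℝ) : Prop :=
  (∀ t ∈ Set.Icc a b, x t = x a + ∫ s in a..t, x' s) ∧
    IntervalIntegrable x' volume a b ∧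
    MemLp x' (ENNReal.ofReal p) (volume.restrict (Set.Icc a b))

/-- The `W^{1,p}[a,b]`-norm, computed from the value `v = x a` at the left endpoint and the
almost-everywhere derivative `d = x'`:  `(|x(a)|^p + ∫_a^b |x'|^p)^(1/p)`. -/
def wNorm {N : ℕ} (p a b : ℝ) (v : Vec N) (d : ℝ → Vec N) : ℝ :=
  (‖v‖ ^ p + ∫ t in a..b, ‖d t‖ ^ p) ^ (1 / p)

/-- The supremum norm `‖x‖_{C[a,b]}`. -/
def cNorm {N : ℕ} (a b : ℝ) (x : ℝ → Vec N) : ℝ :=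
  sSup ((fun t => ‖x t‖) '' Set.Icc a b)

/-- The static prolongation `φ̄` of `φ : [−R,0] → ℝ^N`. -/
def prolong {N : ℕ} (φ : ℝ → Vec N) : ℝ → Vec N := fun t => if t ≤ 0 then φ t else φ 0

/-- `𝒯(y,φ,r)(t) = 0` for `t ≤ 0` and `𝒯(y,φ,r)(t) = ∫_0^t f((y+φ̄)(s),(y+φ̄)(s−r)) ds` for
`t ∈ [0,T]`. -/
def Tmap {N : ℕ} (f : Vec N × Vec N → Vec N) (y φ : ℝ → Vec N) (r : ℝ) : ℝ → Vec N :=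
  fun t => if t ≤ 0 then 0
    else ∫ s in (0:ℝ)..t, f ((y + prolong φ) s, (y + prolong φ) (s - r))

/-- The almost-everywhere derivative of `𝒯(y,φ,r)`. -/
def Tderiv {N : ℕ} (f : Vec N × Vec N → Vec N) (y φ : ℝ → Vec N) (r : ℝ) : ℝ → Vec N :=
  fun t => if t ≤ 0 then 0 else f ((y + prolong φ) t, (y + prolong φ) (t - r))

/-- let `f` be locally Lipschitz, `B ⊂ C([−R,0],ℝ^N)` bounded and `δ > 0`.  For all
sufficiently small `T > 0` there is `c ∈ (0,1)` such that for every `(φ,r) ∈ B × [0,R]` the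
operator `𝒯(·,φ,r)` maps `Γ̄(δ)` into `Γ_{1,p}(δ)` and is a uniform contraction:
`‖𝒯(y₁,φ,r) − 𝒯(y₂,φ,r)‖_{W^{1,p}[−R,T]} ≤ c‖y₁ − y₂‖_{C[−R,T]}` for all `y₁,y₂ ∈ Γ̄(δ)`.
Here `Γ̄(δ)` is the set of continuous `y : [−R,T] → ℝ^N` vanishing on `[−R,0]` with
`‖y‖_{C[−R,T]} ≤ δ`, and membership of `Γ_{1,p}(δ)` means: vanishing on `[−R,0]`, belonging to
`W^{1,p}([−R,T],ℝ^N)`, and `W^{1,p}`-norm `< δ`. -/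

lemma lipOnCompact {α β : Type*} [MetricSpace α] [MetricSpace β] {f : α → β}
    (hf : LocallyLipschitz f) {S : Set α} (hS : IsCompact S) :
    ∃ L : ℝ, 0 ≤ L ∧ ∀ a ∈ S, ∀ b ∈ S, dist (f a) (f b) ≤ L * dist a b := by
  have hcont : Continuous f := hf.continuous
  choose K t ht lip using hf
  choose ε hεpos hball using fun x => Metric.mem_nhds_iff.mp (ht x)
  obtain ⟨s, hsS, hcov⟩ := hS.elim_nhds_subcover (fun x => Metric.ball x (ε x / 2))
    (fun x _ => Metric.ball_mem_nhds x (half_pos (hεpos x)))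
  rcases s.eq_empty_or_nonempty with hs | hs
  · refine ⟨0, le_rfl, fun a ha b hb => ?_⟩
    exfalso
    have := hcov ha
    simp [hs] at this
  obtain ⟨C, hC⟩ := Metric.isBounded_iff.mp (hS.image hcont).isBounded
  set C' : ℝ := max C 0 with hC'
  set d : ℝ := s.inf' hs (fun x => ε x / 2) with hd
  have hdpos : 0 < d := by
    rw [hd, Finset.lt_inf'_iff]
    exact fun x _ => half_pos (hεpos x)
  set Km : ℝ := ((s.sup K : NNReal) : ℝ) with hKm
  refine ⟨max Km (C' / d), le_max_of_le_right (by positivity), fun a ha b hb => ?_⟩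
  by_cases hab : dist a b < d
  · obtain ⟨x, hxs, hax⟩ := by
      have := hcov ha
      simpa using this
    have hbx : b ∈ Metric.ball x (ε x) := by
      have : dist b x ≤ dist b a + dist a x := dist_triangle b a x
      have h1 : dist a x < ε x / 2 := hax
      have h2 : dist b a < d := by rwa [dist_comm]
      have h3 : d ≤ ε x / 2 := Finset.inf'_le _ hxs
      simp only [Metric.mem_ball]
      linarith
    have haxb : a ∈ Metric.ball x (ε x) :=
      Metric.ball_subset_ball (by linarith [hεpos x]) hax
    have hlip := (lip x).dist_le_mul a (hball x haxb) b (hball x hbx)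
    have hKle : (K x : ℝ) ≤ Km := by
      rw [hKm]
      exact_mod_cast NNReal.coe_le_coe.mpr (Finset.le_sup hxs)
    calc dist (f a) (f b) ≤ (K x : ℝ) * dist a b := hlip
      _ ≤ Km * dist a b := by
          exact mul_le_mul_of_nonneg_right hKle dist_nonneg
      _ ≤ max Km (C' / d) * dist a b :=
          mul_le_mul_of_nonneg_right (le_max_left _ _) dist_nonneg
  · push_neg at hab
    have h1 : dist (f a) (f b) ≤ C' := le_max_of_le_left
      (hC (mem_image_of_mem f ha) (mem_image_of_mem f hb))
    calc dist (f a) (f b) ≤ C' := h1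
      _ = C' / d * d := by field_simp
      _ ≤ C' / d * dist a b := by
          apply mul_le_mul_of_nonneg_left hab (by positivity)
      _ ≤ max Km (C' / d) * dist a b :=
          mul_le_mul_of_nonneg_right (le_max_right _ _) dist_nonneg


lemma core {N : ℕ} {p : ℝ} (hp : 1 ≤ p) {R T : ℝ} (hR : 0 < R) (hT : 0 < T)
    {g : ℝ → Vec N} (hg : ContinuousOn g (Icc 0 T)) {Kb : ℝ} (hKb : 0 ≤ Kb)
    (hbd : ∀ s ∈ Icc 0 T, ‖g s‖ ≤ Kb) :
    IntervalIntegrable (fun t => if t ≤ 0 then (0:Vec N) else g t) volume (-R) T ∧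
    MemLp (fun t => if t ≤ 0 then (0:Vec N) else g t) (ENNReal.ofReal p)
      (volume.restrict (Icc (-R) T)) ∧
    (∀ t ∈ Icc (-R) T,
      (if t ≤ 0 then (0:Vec N) else ∫ s in (0:ℝ)..t, g s)
        = ∫ s in (-R:ℝ)..t, (if s ≤ 0 then (0:Vec N) else g s)) ∧
    (∫ t in (-R:ℝ)..T, ‖(if t ≤ 0 then (0:Vec N) else g t)‖ ^ p) ≤ T * Kb ^ p := by
  have hppos : 0 < p := lt_of_lt_of_le one_pos hp
  have hp0 : p ≠ 0 := ne_of_gt hppos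
  have h0T : (0:ℝ) ≤ T := hT.le
  have hR0 : (-R:ℝ) ≤ 0 := by linarith
  have hRT : (-R:ℝ) ≤ T := by linarith
  set D : ℝ → Vec N := fun t => if t ≤ 0 then (0:Vec N) else g t with hD
  have hDzero : ∀ t ≤ (0:ℝ), D t = 0 := fun t ht => if_pos ht
  have hDg : ∀ t, 0 < t → D t = g t := fun t ht => if_neg (not_le.mpr ht)
  -- interval integrability on [-R,0]
  have hII1 : IntervalIntegrable D volume (-R) 0 := by
    refine (intervalIntegrable_const (c := (0:Vec N))).congr ?_
    intro x hx
    rw [uIoc_of_le hR0] at hx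
    exact (hDzero x hx.2).symm
  -- interval integrability on [0,t] for t ∈ [0,T]
  have hII2 : ∀ t ∈ Icc (0:ℝ) T, IntervalIntegrable D volume 0 t := by
    intro t ht
    have hgc : ContinuousOn g (uIcc 0 t) := by
      rw [uIcc_of_le ht.1]; exact hg.mono (Icc_subset_Icc le_rfl ht.2)
    refine hgc.intervalIntegrable.congr ?_
    intro x hx
    rw [uIoc_of_le ht.1] at hx
    exact (hDg x hx.1).symm
  have hIIT := hII2 T ⟨h0T, le_rfl⟩
  have hIIfull : IntervalIntegrable D volume (-R) T := hII1.trans hIIT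
  -- measurability
  have hDsm : AEStronglyMeasurable D (volume.restrict (Icc (-R) T)) := by
    have h1 : AEStronglyMeasurable D (volume.restrict (Iic (0:ℝ))) := by
      refine AEStronglyMeasurable.congr (f := fun _ => (0:Vec N)) aestronglyMeasurable_const ?_
      refine (ae_restrict_iff' measurableSet_Iic).mpr (ae_of_all _ fun x hx => ?_)
      exact (hDzero x hx).symm
    have h2 : AEStronglyMeasurable D (volume.restrict (Ioc (0:ℝ) T)) := by
      refine ((hg.mono Ioc_subset_Icc_self).aestronglyMeasurable measurableSet_Ioc).congr ?_
      refine (ae_restrict_iff' measurableSet_Ioc).mpr (ae_of_all _ fun x hx => ?_)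
      exact (hDg x hx.1).symm
    have hsub : Icc (-R) T ⊆ Iic 0 ∪ Ioc 0 T := by
      intro x hx
      by_cases hx0 : x ≤ 0
      · exact Or.inl hx0
      · exact Or.inr ⟨not_le.mp hx0, hx.2⟩
    exact (aestronglyMeasurable_union_iff.mpr ⟨h1, h2⟩).mono_measure
      (Measure.restrict_mono hsub le_rfl)
  -- Memℒp
  have hmem : MemLp D (ENNReal.ofReal p) (volume.restrict (Icc (-R) T)) := by
    refine MemLp.of_bound hDsm Kb ?_
    refine (ae_restrict_iff' measurableSet_Icc).mpr (ae_of_all _ fun x hx => ?_)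
    by_cases hx0 : x ≤ 0
    · rw [hDzero x hx0]; simpa using hKb
    · rw [hDg x (not_le.mp hx0)]
      exact hbd x ⟨(not_le.mp hx0).le, hx.2⟩
  -- FTC
  have hFTC : ∀ t ∈ Icc (-R) T,
      (if t ≤ 0 then (0:Vec N) else ∫ s in (0:ℝ)..t, g s) = ∫ s in (-R:ℝ)..t, D s := by
    intro t ht
    by_cases ht0 : t ≤ 0
    · rw [if_pos ht0]
      rw [intervalIntegral.integral_congr (g := fun _ => (0:Vec N))
        (fun x hx => by
          rw [uIcc_of_le ht.1] at hx
          exact hDzero x (le_trans hx.2 ht0))]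
      simp
    · push_neg at ht0
      rw [if_neg (not_le.mpr ht0)]
      rw [← intervalIntegral.integral_add_adjacent_intervals hII1
        (hII2 t ⟨ht0.le, ht.2⟩)]
      have e1 : ∫ s in (-R:ℝ)..0, D s = 0 := by
        rw [intervalIntegral.integral_congr (g := fun _ => (0:Vec N))
          (fun x hx => by
            rw [uIcc_of_le hR0] at hx
            exact hDzero x hx.2)]
        simp
      have e2 : ∫ s in (0:ℝ)..t, D s = ∫ s in (0:ℝ)..t, g s := by
        refine intervalIntegral.integral_congr_ae (ae_of_all _ fun x hx => ?_)
        rw [uIoc_of_le ht0.le] at hx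
        exact hDg x hx.1
      rw [e1, e2, zero_add]
  -- norm integral bound
  have hbound : (∫ t in (-R:ℝ)..T, ‖D t‖ ^ p) ≤ T * Kb ^ p := by
    have hh2cont : ContinuousOn (fun t => ‖g t‖ ^ p) (Icc 0 T) :=
      (hg.norm).rpow_const (fun x _ => Or.inr hppos.le)
    have hIIh2 : IntervalIntegrable (fun t => ‖g t‖ ^ p) volume 0 T := by
      have : ContinuousOn (fun t => ‖g t‖ ^ p) (uIcc 0 T) := by
        rw [uIcc_of_le h0T]; exact hh2cont
      exact this.intervalIntegrable
    have hIIhb : IntervalIntegrable (fun t => ‖D t‖ ^ p) volume 0 T := by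
      refine hIIh2.congr ?_
      intro x hx
      rw [uIoc_of_le h0T] at hx
      show ‖g x‖ ^ p = ‖D x‖ ^ p
      rw [hDg x hx.1]
    have hIIha : IntervalIntegrable (fun t => ‖D t‖ ^ p) volume (-R) 0 := by
      refine (intervalIntegrable_const (c := (0:ℝ))).congr ?_
      intro x hx
      rw [uIoc_of_le hR0] at hx
      show (0:ℝ) = ‖D x‖ ^ p
      rw [hDzero x hx.2, norm_zero, Real.zero_rpow hp0]
    rw [← intervalIntegral.integral_add_adjacent_intervals hIIha hIIhb]
    have e1 : (∫ t in (-R:ℝ)..0, ‖D t‖ ^ p) = 0 := by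
      rw [intervalIntegral.integral_congr (g := fun _ => (0:ℝ))
        (fun x hx => by
          rw [uIcc_of_le hR0] at hx
          rw [hDzero x hx.2, norm_zero, Real.zero_rpow hp0])]
      simp
    rw [e1, zero_add]
    calc (∫ t in (0:ℝ)..T, ‖D t‖ ^ p) ≤ ∫ _ in (0:ℝ)..T, Kb ^ p := by
          refine intervalIntegral.integral_mono_on h0T hIIhb intervalIntegrable_const
            (fun x hx => ?_)
          by_cases hx0 : x ≤ 0
          · rw [hDzero x hx0, norm_zero, Real.zero_rpow hp0]
            exact Real.rpow_nonneg hKb p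
          · rw [hDg x (not_le.mp hx0)]
            exact Real.rpow_le_rpow (norm_nonneg _) (hbd x ⟨(not_le.mp hx0).le, hx.2⟩) hppos.le
      _ = T * Kb ^ p := by simp
  exact ⟨hIIfull, hmem, hFTC, hbound⟩

lemma cNorm_ge {N : ℕ} {a b : ℝ} {y : ℝ → Vec N} (hy : ContinuousOn y (Icc a b))
    {s : ℝ} (hs : s ∈ Icc a b) : ‖y s‖ ≤ cNorm a b y :=
  le_csSup ((isCompact_Icc.image_of_continuousOn hy.norm).bddAbove) ⟨s, hs, rfl⟩

lemma cNorm_nonneg {N : ℕ} {a b : ℝ} {y : ℝ → Vec N} (hab : a ≤ b)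
    (hy : ContinuousOn y (Icc a b)) : 0 ≤ cNorm a b y :=
  le_trans (norm_nonneg _) (cNorm_ge hy ⟨le_rfl, hab⟩)

lemma prolong_eq {N : ℕ} (φ : ℝ → Vec N) : prolong φ = fun t => φ (min t 0) := by
  funext t
  unfold prolong
  split_ifs with h
  · rw [min_eq_left h]
  · rw [min_eq_right (le_of_not_ge h)]

lemma prolong_continuousOn {N : ℕ} {φ : ℝ → Vec N} {R T : ℝ} (hR : 0 < R)
    (hφ : ContinuousOn φ (Icc (-R) 0)) : ContinuousOn (prolong φ) (Icc (-R) T) := by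
  rw [prolong_eq]
  refine hφ.comp ((continuous_id.min continuous_const).continuousOn) ?_
  intro t ht
  exact ⟨le_min ht.1 (by linarith), min_le_right _ _⟩

theorem stmt6 (N : ℕ) (hN : 1 ≤ N) (p : ℝ) (hp : 1 ≤ p) (R : ℝ) (hR : 0 < R)
    (f : Vec N × Vec N → Vec N) (hf : LocallyLipschitz f)
    (B : Set (ℝ → Vec N)) (hBc : ∀ φ ∈ B, ContinuousOn φ (Set.Icc (-R) 0))
    (hBb : ∃ M, ∀ φ ∈ B, ∀ t ∈ Set.Icc (-R) (0:ℝ), ‖φ t‖ ≤ M)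
    (δ : ℝ) (hδ : 0 < δ) :
    ∃ T0 > 0, ∀ T : ℝ, 0 < T → T ≤ T0 → ∃ c, 0 < c ∧ c < 1 ∧
      ∀ φ ∈ B, ∀ r ∈ Set.Icc (0:ℝ) R,
        (∀ y : ℝ → Vec N, ContinuousOn y (Set.Icc (-R) T) →
          (∀ t ∈ Set.Icc (-R) (0:ℝ), y t = 0) → cNorm (-R) T y ≤ δ →
          (∀ t ∈ Set.Icc (-R) (0:ℝ), Tmap f y φ r t = 0) ∧
            HasW1pOn (Tmap f y φ r) (Tderiv f y φ r) p (-R) T ∧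
            wNorm p (-R) T (Tmap f y φ r (-R)) (Tderiv f y φ r) < δ) ∧
        ∀ y₁ y₂ : ℝ → Vec N,
          ContinuousOn y₁ (Set.Icc (-R) T) → (∀ t ∈ Set.Icc (-R) (0:ℝ), y₁ t = 0) →
            cNorm (-R) T y₁ ≤ δ →
          ContinuousOn y₂ (Set.Icc (-R) T) → (∀ t ∈ Set.Icc (-R) (0:ℝ), y₂ t = 0) →
            cNorm (-R) T y₂ ≤ δ →
          wNorm p (-R) T (Tmap f y₁ φ r (-R) - Tmap f y₂ φ r (-R))
              (fun t => Tderiv f y₁ φ r t - Tderiv f y₂ φ r t) ≤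
            c * cNorm (-R) T (fun t => y₁ t - y₂ t) := by
  have hppos : 0 < p := lt_of_lt_of_le one_pos hp
  have hp0 : p ≠ 0 := ne_of_gt hppos
  have hpinv : (0:ℝ) < 1 / p := by positivity
  obtain ⟨M₀, hM₀⟩ := hBb
  set M : ℝ := max M₀ 0 with hM
  have hM9 : 0 ≤ M := le_max_right _ _
  set ρ : ℝ := δ + M with hρ
  have hρpos : 0 < ρ := by positivity
  set Kset : Set (Vec N × Vec N) :=
    Metric.closedBall (0:Vec N) ρ ×ˢ Metric.closedBall (0:Vec N) ρ with hKset
  have hKcomp : IsCompact Kset :=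
    (isCompact_closedBall _ _).prod (isCompact_closedBall _ _)
  obtain ⟨L₀, hL₀0, hLip⟩ := lipOnCompact hf hKcomp
  set L : ℝ := max L₀ 1 with hL
  have hL1 : (1:ℝ) ≤ L := le_max_right _ _
  have hLpos : 0 < L := lt_of_lt_of_le one_pos hL1
  obtain ⟨Kb₀, hKb₀⟩ := hKcomp.exists_bound_of_continuousOn hf.continuous.continuousOn
  set Kb : ℝ := max Kb₀ 1 with hKb
  have hKb1 : (1:ℝ) ≤ Kb := le_max_right _ _
  have hKbpos : 0 < Kb := lt_of_lt_of_le one_pos hKb1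
  set T0 : ℝ := min (δ ^ p / (2 * Kb ^ p)) ((2 * L)⁻¹ ^ p) with hT0
  have hT0pos : 0 < T0 := by
    refine lt_min ?_ ?_
    · have h1 : (0:ℝ) < δ ^ p := Real.rpow_pos_of_pos hδ p
      have h2 : (0:ℝ) < Kb ^ p := Real.rpow_pos_of_pos hKbpos p
      positivity
    · have : (0:ℝ) < (2 * L)⁻¹ := by positivity
      exact Real.rpow_pos_of_pos this p
  refine ⟨T0, hT0pos, fun T hT hTT0 => ?_⟩
  have h0T : (0:ℝ) ≤ T := hT.le
  have hR0 : (-R:ℝ) ≤ 0 := by linarith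
  have hRT : (-R:ℝ) ≤ T := by linarith
  set c : ℝ := T0 ^ (1 / p) * L with hc
  have hc0 : 0 < c := mul_pos (Real.rpow_pos_of_pos hT0pos _) hLpos
  have hcle : c ≤ 1 / 2 := by
    have h1 : T0 ^ (1 / p) ≤ ((2 * L)⁻¹ ^ p) ^ (1 / p) :=
      Real.rpow_le_rpow hT0pos.le (min_le_right _ _) hpinv.le
    have h2 : ((2 * L)⁻¹ ^ p) ^ (1 / p) = (2 * L)⁻¹ := by
      rw [one_div, Real.rpow_rpow_inv (by positivity) hp0]
    have h3 : T0 ^ (1 / p) * L ≤ (2 * L)⁻¹ * L :=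
      mul_le_mul_of_nonneg_right (by rw [← h2]; exact h1) hLpos.le
    calc c ≤ (2 * L)⁻¹ * L := h3
      _ = 1 / 2 := by field_simp
  have hc1 : c < 1 := lt_of_le_of_lt hcle one_half_lt_one
  refine ⟨c, hc0, hc1, fun φ hφB r hr => ?_⟩
  have hφc : ContinuousOn (prolong φ) (Icc (-R) T) :=
    prolong_continuousOn hR (hBc φ hφB)
  have hφbd : ∀ τ ∈ Icc (-R) T, ‖prolong φ τ‖ ≤ M := by
    intro τ hτ
    rw [prolong_eq]
    refine le_trans (hM₀ φ hφB (min τ 0) ⟨le_min hτ.1 (by linarith), min_le_right _ _⟩)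
      (le_max_left _ _)
  have hmaps : ∀ s ∈ Icc (0:ℝ) T, s - r ∈ Icc (-R) T := by
    intro s hs
    constructor
    · have := hr.2; have := hs.1; linarith
    · have := hr.1; have := hs.2; linarith
  -- common facts for admissible y
  have hu : ∀ y : ℝ → Vec N, ContinuousOn y (Icc (-R) T) → cNorm (-R) T y ≤ δ →
      ContinuousOn (fun s => f ((y + prolong φ) s, (y + prolong φ) (s - r))) (Icc 0 T) ∧
      (∀ s ∈ Icc (0:ℝ) T, ((y + prolong φ) s, (y + prolong φ) (s - r)) ∈ Kset) := by
    intro y hyc hyδ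
    have huc : ContinuousOn (y + prolong φ) (Icc (-R) T) := hyc.add hφc
    have hubd : ∀ τ ∈ Icc (-R) T, ‖(y + prolong φ) τ‖ ≤ ρ := by
      intro τ hτ
      calc ‖y τ + prolong φ τ‖ ≤ ‖y τ‖ + ‖prolong φ τ‖ := norm_add_le _ _
        _ ≤ δ + M := add_le_add (le_trans (cNorm_ge hyc hτ) hyδ) (hφbd τ hτ)
    constructor
    · refine hf.continuous.comp_continuousOn (ContinuousOn.prodMk ?_ ?_)
      · exact huc.mono (Icc_subset_Icc (by linarith) le_rfl)
      · exact huc.comp ((continuous_id.sub continuous_const).continuousOn) hmaps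
    · intro s hs
      refine ⟨Metric.mem_closedBall.mpr ?_, Metric.mem_closedBall.mpr ?_⟩
      · rw [dist_zero_right]
        exact hubd s (Icc_subset_Icc (by linarith) le_rfl hs)
      · rw [dist_zero_right]
        exact hubd (s - r) (hmaps s hs)
  refine ⟨?_, ?_⟩
  · -- part 1
    intro y hyc hy0 hyδ
    obtain ⟨hgc, hmemK⟩ := hu y hyc hyδ
    have hbd : ∀ s ∈ Icc (0:ℝ) T,
        ‖f ((y + prolong φ) s, (y + prolong φ) (s - r))‖ ≤ Kb :=
      fun s hs => le_trans (hKb₀ _ (hmemK s hs)) (le_max_left _ _)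
    obtain ⟨hII, hmem, hFTC, hbnd⟩ := core hp hR hT hgc (by linarith) hbd
    have hTmR : Tmap f y φ r (-R) = 0 := if_pos hR0
    refine ⟨fun t ht => if_pos ht.2, ⟨?_, hII, hmem⟩, ?_⟩
    · intro t ht
      rw [hTmR, zero_add]
      exact hFTC t ht
    · rw [wNorm, hTmR, norm_zero, Real.zero_rpow hp0, zero_add]
      have hnn : 0 ≤ ∫ t in (-R:ℝ)..T, ‖Tderiv f y φ r t‖ ^ p :=
        intervalIntegral.integral_nonneg hRT
          (fun u _ => Real.rpow_nonneg (norm_nonneg _) p)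
      have hKbp : (0:ℝ) ≤ Kb ^ p := Real.rpow_nonneg hKbpos.le p
      have hlt : (∫ t in (-R:ℝ)..T, ‖Tderiv f y φ r t‖ ^ p) < δ ^ p := by
        have h1 : T * Kb ^ p ≤ T0 * Kb ^ p := mul_le_mul_of_nonneg_right hTT0 hKbp
        have h2 : T0 * Kb ^ p ≤ δ ^ p / 2 := by
          have := min_le_left (δ ^ p / (2 * Kb ^ p)) ((2 * L)⁻¹ ^ p)
          have hKbp' : (0:ℝ) < Kb ^ p := Real.rpow_pos_of_pos hKbpos p
          calc T0 * Kb ^ p ≤ δ ^ p / (2 * Kb ^ p) * Kb ^ p :=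
                mul_le_mul_of_nonneg_right this hKbp
            _ = δ ^ p / 2 := by field_simp
        have h3 : δ ^ p / 2 < δ ^ p := by
          have : (0:ℝ) < δ ^ p := Real.rpow_pos_of_pos hδ p
          linarith
        exact lt_of_le_of_lt (le_trans hbnd (le_trans h1 h2)) h3
      calc (∫ t in (-R:ℝ)..T, ‖Tderiv f y φ r t‖ ^ p) ^ (1 / p)
          < (δ ^ p) ^ (1 / p) := Real.rpow_lt_rpow hnn hlt hpinv
        _ = δ := by rw [one_div, Real.rpow_rpow_inv hδ.le hp0]
  · -- part 2
    intro y₁ y₂ hy1c hy10 hy1δ hy2c hy20 hy2δ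
    obtain ⟨hg1c, hmemK1⟩ := hu y₁ hy1c hy1δ
    obtain ⟨hg2c, hmemK2⟩ := hu y₂ hy2c hy2δ
    set cN : ℝ := cNorm (-R) T (fun t => y₁ t - y₂ t) with hcN
    have hdiffc : ContinuousOn (fun t => y₁ t - y₂ t) (Icc (-R) T) := hy1c.sub hy2c
    have hcN0 : 0 ≤ cN := cNorm_nonneg hRT hdiffc
    set g12 : ℝ → Vec N := fun s =>
      f ((y₁ + prolong φ) s, (y₁ + prolong φ) (s - r)) -
        f ((y₂ + prolong φ) s, (y₂ + prolong φ) (s - r)) with hg12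
    have hg12c : ContinuousOn g12 (Icc 0 T) := hg1c.sub hg2c
    have hLcN : (0:ℝ) ≤ L * cN := mul_nonneg hLpos.le hcN0
    have hdistu : ∀ τ ∈ Icc (-R) T,
        dist ((y₁ + prolong φ) τ) ((y₂ + prolong φ) τ) ≤ cN := by
      intro τ hτ
      rw [dist_eq_norm]
      have : (y₁ + prolong φ) τ - (y₂ + prolong φ) τ = y₁ τ - y₂ τ := by
        simp [Pi.add_apply]
      rw [this]
      exact cNorm_ge hdiffc hτ
    have hbd12 : ∀ s ∈ Icc (0:ℝ) T, ‖g12 s‖ ≤ L * cN := by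
      intro s hs
      rw [hg12, ← dist_eq_norm]
      have hd : dist ((y₁ + prolong φ) s, (y₁ + prolong φ) (s - r))
          ((y₂ + prolong φ) s, (y₂ + prolong φ) (s - r)) ≤ cN := by
        rw [Prod.dist_eq]
        exact max_le (hdistu s (Icc_subset_Icc (by linarith) le_rfl hs))
          (hdistu (s - r) (hmaps s hs))
      calc dist (f ((y₁ + prolong φ) s, (y₁ + prolong φ) (s - r)))
            (f ((y₂ + prolong φ) s, (y₂ + prolong φ) (s - r)))
          ≤ L₀ * dist ((y₁ + prolong φ) s, (y₁ + prolong φ) (s - r))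
              ((y₂ + prolong φ) s, (y₂ + prolong φ) (s - r)) :=
            hLip _ (hmemK1 s hs) _ (hmemK2 s hs)
        _ ≤ L * cN := mul_le_mul (le_max_left _ _) hd dist_nonneg hLpos.le
    obtain ⟨hII, hmem, hFTC, hbnd⟩ := core hp hR hT hg12c hLcN hbd12
    have hv : Tmap f y₁ φ r (-R) - Tmap f y₂ φ r (-R) = 0 := by
      rw [Tmap, Tmap]
      simp [hR0]
    have hfun : (fun t => Tderiv f y₁ φ r t - Tderiv f y₂ φ r t) =
        fun t => if t ≤ 0 then (0:Vec N) else g12 t := by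
      funext t
      by_cases h : t ≤ 0 <;> simp [Tderiv, h, hg12]
    rw [hfun, wNorm, hv, norm_zero, Real.zero_rpow hp0, zero_add]
    have hnn : 0 ≤ ∫ t in (-R:ℝ)..T, ‖if t ≤ 0 then (0:Vec N) else g12 t‖ ^ p :=
      intervalIntegral.integral_nonneg hRT
        (fun u _ => Real.rpow_nonneg (norm_nonneg _) p)
    have hLcNp : (0:ℝ) ≤ (L * cN) ^ p := Real.rpow_nonneg hLcN p
    have h1 : (∫ t in (-R:ℝ)..T, ‖if t ≤ 0 then (0:Vec N) else g12 t‖ ^ p)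
        ≤ T0 * (L * cN) ^ p :=
      le_trans hbnd (mul_le_mul_of_nonneg_right hTT0 hLcNp)
    calc (∫ t in (-R:ℝ)..T, ‖if t ≤ 0 then (0:Vec N) else g12 t‖ ^ p) ^ (1 / p)
        ≤ (T0 * (L * cN) ^ p) ^ (1 / p) := Real.rpow_le_rpow hnn h1 hpinv.le
      _ = T0 ^ (1 / p) * ((L * cN) ^ p) ^ (1 / p) :=
          Real.mul_rpow hT0pos.le hLcNp
      _ = T0 ^ (1 / p) * (L * cN) := by
          rw [one_div, Real.rpow_rpow_inv hLcN hp0]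
      _ = c * cN := by rw [hc]; ring
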